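/- With hypotheses as in the tower lemma (finite free A_r-modules M_r with Δ_1-action, free of rank d over A_r[Δ_1/Δ_r] with surjective compatible transition maps), for any A_∞ := colim A_r-algebra B, the limit M_B := lim_r (M_r ⊗_{A_r} B) is a free module of rank d over the completed group ring Λ_B := lim_r B[Δ_1/Δ_r], and the canonical map M_B ⊗_{Λ_B} B[Δ_1/Δ_r] → M_r ⊗_{A_r} B is an isomorphism for every r. -/

import Mathlib

open MonoidAlgebra

variable {B : Type} [CommRing B] {G : Type} [CommGroup G]

/-- The transition map `B[G ⧸ N r] → B[G ⧸ N s]` (for `s ≤ r`) between the finite-level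
group rings, induced by the quotient map `G ⧸ N r → G ⧸ N s`.  The completed group ring
`Λ_B = lim_r B[Δ₁/Δ_r]` is the set of families compatible under these maps. -/
noncomputable def groupRingTransition (N : ℕ → Subgroup G)
    (hN : ∀ s r : ℕ, s ≤ r → N r ≤ N s) (s r : ℕ) (h : s ≤ r) :
    MonoidAlgebra B (G ⧸ N r) →+* MonoidAlgebra B (G ⧸ N s) :=
  MonoidAlgebra.mapDomainRingHom B
    (QuotientGroup.map (N r) (N s) (MonoidHom.id G) (by simpa using hN s r h))

lemma grtSurj (N : ℕ → Subgroup G) (hN : ∀ s r : ℕ, s ≤ r → N r ≤ N s) (s r : ℕ) (h : s ≤ r) :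
    Function.Surjective (groupRingTransition (B := B) N hN s r h) := by
  have hf : Function.Surjective
      (QuotientGroup.map (N r) (N s) (MonoidHom.id G) (by simpa using hN s r h)) := by
    intro y
    obtain ⟨g, rfl⟩ := QuotientGroup.mk_surjective y
    exact ⟨QuotientGroup.mk g, QuotientGroup.map_mk _ _ _ _ _⟩
  intro x
  refine ⟨MonoidAlgebra.ofCoeff (Finsupp.mapDomain (Function.surjInv hf) x.coeff), ?_⟩
  show MonoidAlgebra.ofCoeff (Finsupp.mapDomain _ (Finsupp.mapDomain _ x.coeff)) = x
  rw [← Finsupp.mapDomain_comp]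
  have : (⇑(QuotientGroup.map (N r) (N s) (MonoidHom.id G) (by simpa using hN s r h)) ∘
      Function.surjInv hf) = id := by
    funext z; exact Function.surjInv_eq hf z
  rw [this, Finsupp.mapDomain_id, MonoidAlgebra.ofCoeff_coeff]

lemma grtSingle (N : ℕ → Subgroup G) (hN : ∀ s r : ℕ, s ≤ r → N r ≤ N s) (s r : ℕ) (h : s ≤ r)
    (g : G) (b : B) :
    groupRingTransition (B := B) N hN s r h (single (QuotientGroup.mk g : G ⧸ N r) b) =
      single (QuotientGroup.mk g : G ⧸ N s) b := by
  show MonoidAlgebra.mapDomain _ _ = _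
  rw [MonoidAlgebra.mapDomain_single, QuotientGroup.map_mk]
  rfl

lemma liftBasisAux (N : ℕ → Subgroup G) (hN : ∀ s r : ℕ, s ≤ r → N r ≤ N s)
    [∀ r, IsLocalRing (MonoidAlgebra B (G ⧸ N r))]
    (W : ℕ → Type) [∀ r, AddCommGroup (W r)] [∀ r, Module B (W r)]
    [∀ r, Module (MonoidAlgebra B (G ⧸ N r)) (W r)]
    [∀ r, IsScalarTower B (MonoidAlgebra B (G ⧸ N r)) (W r)]
    (d : ℕ) (s r : ℕ) (h : s ≤ r)
    (bs : Module.Basis (Fin d) (MonoidAlgebra B (G ⧸ N s)) (W s))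
    (br : Module.Basis (Fin d) (MonoidAlgebra B (G ⧸ N r)) (W r))
    (τ' : W r →ₗ[B] W s)
    (hsemi : ∀ (y : MonoidAlgebra B (G ⧸ N r)) (w : W r),
      τ' (y • w) = (groupRingTransition N hN s r h y) • τ' w)
    (hsurj : Function.Surjective τ')
    (hker : LinearMap.ker τ' = Submodule.span B
        {x : W r | ∃ g ∈ N s, ∃ w : W r,
          x = (single (QuotientGroup.mk g : G ⧸ N r) (1 : B)) • w - w}) :
    ∃ b' : Module.Basis (Fin d) (MonoidAlgebra B (G ⧸ N r)) (W r), ∀ i, τ' (b' i) = bs i := by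
  classical
  set Q := MonoidAlgebra B (G ⧸ N r)
  set ρ := groupRingTransition (B := B) N hN s r h with hρ
  have hρsurj := grtSurj (B := B) N hN s r h
  have hI : RingHom.ker ρ ≤ IsLocalRing.maximalIdeal Q := by
    apply IsLocalRing.le_maximalIdeal
    intro htop
    have h1 : (1 : Q) ∈ RingHom.ker ρ := htop ▸ Submodule.mem_top
    rw [RingHom.mem_ker, map_one] at h1
    exact one_ne_zero h1
  choose v hv using fun i => hsurj (bs i)
  set Nsub : Submodule Q (W r) := Submodule.span Q (Set.range v) with hNsub
  have hkerle : (LinearMap.ker τ' : Set (W r)) ⊆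
      ↑(RingHom.ker ρ • (⊤ : Submodule Q (W r))) := by
    rw [hker]
    intro x hx
    refine Submodule.span_le
      (p := Submodule.restrictScalars B (RingHom.ker ρ • (⊤ : Submodule Q (W r)))) |>.mpr ?_ hx
    rintro y ⟨g, hg, w, rfl⟩
    have h1 : (single (QuotientGroup.mk g : G ⧸ N r) (1 : B)) - 1 ∈ RingHom.ker ρ := by
      rw [RingHom.mem_ker, map_sub, map_one, grtSingle]
      have hg1 : (QuotientGroup.mk g : G ⧸ N s) = 1 := (QuotientGroup.eq_one_iff g).mpr hg
      rw [hg1, ← MonoidAlgebra.one_def, sub_self]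
    have h2 : (single (QuotientGroup.mk g : G ⧸ N r) (1 : B)) • w - w =
        ((single (QuotientGroup.mk g : G ⧸ N r) (1 : B) : Q) - 1) • w := by
      rw [sub_smul, one_smul]
    show _ ∈ Submodule.restrictScalars B (RingHom.ker ρ • (⊤ : Submodule Q (W r)))
    rw [Submodule.restrictScalars_mem, h2]
    exact Submodule.smul_mem_smul h1 Submodule.mem_top
  have hNsup : (⊤ : Submodule Q (W r)) ≤ Nsub ⊔ RingHom.ker ρ • ⊤ := by
    intro w _
    choose a ha using fun i => hρsurj (bs.repr (τ' w) i)
    set w' := ∑ i, a i • v i with hw'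
    have hw'mem : w' ∈ Nsub :=
      Submodule.sum_mem _ fun i _ => Submodule.smul_mem _ _ (Submodule.subset_span ⟨i, rfl⟩)
    have hτw' : τ' w' = τ' w := by
      rw [hw', map_sum]
      have : ∀ i ∈ Finset.univ, τ' (a i • v i) = bs.repr (τ' w) i • bs i := by
        intro i _
        rw [hsemi, ha, hv]
      rw [Finset.sum_congr rfl this]
      exact bs.sum_repr (τ' w)
    have hk : w - w' ∈ LinearMap.ker τ' := by
      rw [LinearMap.mem_ker, map_sub, hτw', sub_self]
    have h2 : w - w' ∈ RingHom.ker ρ • (⊤ : Submodule Q (W r)) := hkerle hk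
    have h3 : w = w' + (w - w') := by rw [add_sub_cancel]
    rw [h3]
    exact Submodule.add_mem_sup hw'mem h2
  haveI hfin : Module.Finite Q (W r) := Module.Finite.of_basis br
  have htop : Nsub = ⊤ := by
    refine top_le_iff.mp ?_
    refine Submodule.le_of_le_smul_of_le_jacobson_bot Module.Finite.fg_top ?_ hNsup
    rw [IsLocalRing.jacobson_eq_maximalIdeal ⊥ bot_ne_top]
    exact hI
  set φ : W r →ₗ[Q] W r := br.constr ℕ v with hφdef
  have hφ : ∀ i, φ (br i) = v i := fun i => br.constr_basis ℕ v i
  have hφsurj : Function.Surjective φ := by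
    rw [← LinearMap.range_eq_top]
    refine top_le_iff.mp ?_
    rw [← htop, hNsub]
    refine Submodule.span_le.mpr ?_
    rintro x ⟨i, rfl⟩
    exact ⟨br i, hφ i⟩
  have hφinj : Function.Injective φ :=
    OrzechProperty.injective_of_surjective_endomorphism φ hφsurj
  refine ⟨br.map (LinearEquiv.ofBijective φ ⟨hφinj, hφsurj⟩), fun i => ?_⟩
  have : (br.map (LinearEquiv.ofBijective φ ⟨hφinj, hφsurj⟩)) i = v i := by
    rw [Module.Basis.map_apply]
    exact hφ i
  rw [this, hv]


/-- Lemma `Technical` (3),(4): the `Λ`-adic limit of a tower.  `G = Δ₁` is a commutative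
(pro-`p`) group with descending subgroups `N r = Δ_r`; for an `A_∞`-algebra `B`, the
modules `W r` stand for `M r ⊗_{A r} B`, a tower of modules over the group rings
`B[G ⧸ N r]`, each free of rank `d`, with surjective, functorial, semilinear transition
maps `τ` which moreover induce isomorphisms after `⊗_{B[G⧸Nr]} B[G⧸Ns]` (kernel spanned
by the elements `g•w − w`, `g ∈ N s`).  Conclusion: the limit
`M_B = lim_r W r` (realized as the set of compatible families inside `Π r, W r`) is a
free module of rank `d` over the completed group ring `Λ_B = lim_r B[G ⧸ N r]`
(realized as compatible families of group-ring elements, acting componentwise), and for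
each `r` the canonical map `M_B ⊗_{Λ_B} B[Δ₁/Δ_r] → W r` is an isomorphism: the
projection `M_B → W r` is surjective with "kernel" `ker(Λ_B → B[G⧸N r]) · M_B`. -/
theorem stmt_13 (N : ℕ → Subgroup G) (hN : ∀ s r : ℕ, s ≤ r → N r ≤ N s)
    [∀ r, Finite (G ⧸ N r)]
    [IsLocalRing B] [∀ r, IsLocalRing (MonoidAlgebra B (G ⧸ N r))]
    (W : ℕ → Type) [∀ r, AddCommGroup (W r)] [∀ r, Module B (W r)]
    [∀ r, Module (MonoidAlgebra B (G ⧸ N r)) (W r)]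
    [∀ r, IsScalarTower B (MonoidAlgebra B (G ⧸ N r)) (W r)]
    (d : ℕ)
    (hfree : ∀ r, Nonempty (Module.Basis (Fin d) (MonoidAlgebra B (G ⧸ N r)) (W r)))
    (τ : ∀ (s r : ℕ), s ≤ r → (W r →ₗ[B] W s))
    (hτsemi : ∀ (s r : ℕ) (h : s ≤ r) (y : MonoidAlgebra B (G ⧸ N r)) (w : W r),
      τ s r h (y • w) = (groupRingTransition N hN s r h y) • τ s r h w)
    (hτid : ∀ r (h : r ≤ r), τ r r h = LinearMap.id)
    (hτcomp : ∀ (s u r : ℕ) (h₁ : s ≤ u) (h₂ : u ≤ r) (w : W r),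
      τ s u h₁ (τ u r h₂ w) = τ s r (h₁.trans h₂) w)
    (hτsurj : ∀ (s r : ℕ) (h : s ≤ r), Function.Surjective (τ s r h))
    (hτker : ∀ (s r : ℕ) (h : s ≤ r),
      LinearMap.ker (τ s r h) = Submodule.span B
        {x : W r | ∃ g ∈ N s, ∃ w : W r,
          x = (single (QuotientGroup.mk g : G ⧸ N r) (1 : B)) • w - w}) :
    -- `Λ_B` and `M_B` as sets of compatible families
    (let Λset : Set (∀ r, MonoidAlgebra B (G ⧸ N r)) :=
      {x | ∀ (s r : ℕ) (h : s ≤ r), groupRingTransition N hN s r h (x r) = x s}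
     let MBset : Set (∀ r, W r) :=
      {w | ∀ (s r : ℕ) (h : s ≤ r), τ s r h (w r) = w s}
     -- `M_B` is a free `Λ_B`-module of rank `d` :
     (∃ v : Fin d → (∀ r, W r), (∀ i, v i ∈ MBset) ∧
        (∀ w ∈ MBset, ∃! c : Fin d → (∀ r, MonoidAlgebra B (G ⧸ N r)),
          (∀ i, c i ∈ Λset) ∧ w = ∑ i : Fin d, c i • v i)) ∧
     -- the control isomorphism `M_B ⊗_{Λ_B} B[Δ₁/Δ_r] ≃ W r` for every `r` :
     (∀ r : ℕ, (∀ y : W r, ∃ w ∈ MBset, w r = y) ∧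
        {w : ∀ r', W r' | w ∈ MBset ∧ w r = 0} =
          (AddSubgroup.closure {u : ∀ r', W r' |
            ∃ x ∈ Λset, x r = 0 ∧ ∃ w' ∈ MBset, u = x • w'} : Set (∀ r', W r')))) := by
  classical
  intro Λset MBset
  -- a compatible tower of bases
  have step : ∀ r (b : Module.Basis (Fin d) (MonoidAlgebra B (G ⧸ N r)) (W r)),
      ∃ b' : Module.Basis (Fin d) (MonoidAlgebra B (G ⧸ N (r+1))) (W (r+1)),
        ∀ i, τ r (r+1) (Nat.le_succ r) (b' i) = b i := fun r b =>
    liftBasisAux N hN W d r (r+1) (Nat.le_succ r) b (hfree (r+1)).some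
      (τ r (r+1) (Nat.le_succ r)) (hτsemi r (r+1) (Nat.le_succ r))
      (hτsurj r (r+1) (Nat.le_succ r)) (hτker r (r+1) (Nat.le_succ r))
  let vb : ∀ r, Module.Basis (Fin d) (MonoidAlgebra B (G ⧸ N r)) (W r) :=
    fun r => Nat.rec (hfree 0).some (fun n b => (step n b).choose) r
  have hvb : ∀ r i, τ r (r+1) (Nat.le_succ r) (vb (r+1) i) = vb r i :=
    fun r => (step r (vb r)).choose_spec
  have hvbc : ∀ (r s : ℕ) (h : s ≤ r) (i : Fin d), τ s r h (vb r i) = vb s i := by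
    intro r
    induction r with
    | zero =>
      intro s h i
      obtain rfl := Nat.le_zero.mp h
      rw [hτid]; rfl
    | succ n ih =>
      intro s h i
      rcases eq_or_lt_of_le h with rfl | hlt
      · rw [hτid]; rfl
      · have hsn : s ≤ n := Nat.lt_succ_iff.mp hlt
        rw [← hτcomp s n (n+1) hsn (Nat.le_succ n) (vb (n+1) i), hvb n i, ih s hsn i]
  -- every element of the product decomposes via the pointwise bases
  have hsum : ∀ w : ∀ r, W r,
      w = ∑ i : Fin d, (fun r => (vb r).repr (w r) i) • (fun r => vb r i) := by
    intro w
    funext r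
    rw [Finset.sum_apply]
    simp only [Pi.smul_apply']
    exact ((vb r).sum_repr (w r)).symm
  -- compatibility of the coefficients for compatible families
  have hcoef : ∀ w ∈ MBset, ∀ (i : Fin d) (s t : ℕ) (h : s ≤ t),
      groupRingTransition N hN s t h ((vb t).repr (w t) i) = (vb s).repr (w s) i := by
    intro w hw i s t h
    have h1 : w s = ∑ j, (groupRingTransition N hN s t h ((vb t).repr (w t) j)) • vb s j := by
      rw [← hw s t h]
      conv_lhs => rw [← (vb t).sum_repr (w t)]
      rw [map_sum]
      refine Finset.sum_congr rfl fun j _ => ?_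
      rw [hτsemi, hvbc t s h j]
    have h2 := congrFun ((vb s).repr_sum_self
      fun j => groupRingTransition N hN s t h ((vb t).repr (w t) j)) i
    rw [← h1] at h2
    exact h2.symm
  refine ⟨⟨fun i r => vb r i, fun i s r h => hvbc r s h i, ?_⟩, ?_⟩
  · -- unique coefficients
    intro w hw
    refine ⟨fun i r => (vb r).repr (w r) i, ⟨fun i s t h => hcoef w hw i s t h, hsum w⟩, ?_⟩
    rintro c' ⟨-, hc'⟩
    funext i r
    have h1 : w r = ∑ j, c' j r • vb r j := by
      have := congrFun hc' r
      rw [Finset.sum_apply] at this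
      simpa only [Pi.smul_apply'] using this
    have h2 := congrFun ((vb r).repr_sum_self fun j => c' j r) i
    rw [← h1] at h2
    exact h2.symm
  · intro r
    constructor
    · -- surjectivity of the projection
      intro y
      let u : ∀ n, W (r+n) :=
        fun n => Nat.rec y (fun n z => (hτsurj (r+n) (r+n+1) (Nat.le_succ _) z).choose) n
      have hu : ∀ n, τ (r+n) (r+n+1) (Nat.le_succ _) (u (n+1)) = u n :=
        fun n => (hτsurj (r+n) (r+n+1) (Nat.le_succ _) (u n)).choose_spec
      have hc : ∀ (m n : ℕ) (hnm : n ≤ m) (hq : r+n ≤ r+m), τ (r+n) (r+m) hq (u m) = u n := by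
        intro m
        induction m with
        | zero =>
          intro n hn hq
          obtain rfl := Nat.le_zero.mp hn
          rw [hτid]; rfl
        | succ m ih =>
          intro n hn hq
          rcases eq_or_lt_of_le hn with rfl | hlt
          · rw [hτid]; rfl
          · have hnm : n ≤ m := Nat.lt_succ_iff.mp hlt
            show τ (r+n) ((r+m)+1) hq (u (m+1)) = u n
            rw [← hτcomp (r+n) (r+m) ((r+m)+1) (by omega) (Nat.le_succ _) (u (m+1)), hu m,
              ih n hnm (by omega)]
      refine ⟨fun s => τ s (r+s) (Nat.le_add_left s r) (u s), ?_, ?_⟩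
      · intro s t h
        show τ s t h (τ t (r+t) (Nat.le_add_left t r) (u t)) =
          τ s (r+s) (Nat.le_add_left s r) (u s)
        rw [hτcomp s t (r+t) h (Nat.le_add_left t r) (u t),
          ← hc t s h (by omega), hτcomp]
      · exact hc r 0 (Nat.zero_le r) (by omega)
    · -- the kernel of the projection
      apply Set.Subset.antisymm
      · rintro w ⟨hw, hwr⟩
        show w ∈ AddSubgroup.closure _
        rw [hsum w]
        refine AddSubgroup.sum_mem _ fun i _ => AddSubgroup.subset_closure ?_
        refine ⟨fun r' => (vb r').repr (w r') i, fun s t h => hcoef w hw i s t h, ?_, ?_⟩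
        · show (vb r).repr (w r) i = 0
          rw [hwr, map_zero]; rfl
        · exact ⟨fun r' => vb r' i, fun s t h => hvbc t s h i, rfl⟩
      · intro w hw
        refine AddSubgroup.closure_induction ?_ ?_ ?_ ?_ hw
        · rintro u ⟨x, hx, hxr, w', hw', rfl⟩
          refine ⟨fun s t h => ?_, ?_⟩
          · show τ s t h (x t • w' t) = x s • w' s
            rw [hτsemi, hx s t h, hw' s t h]
          · show x r • w' r = 0
            rw [hxr, zero_smul]
        · exact ⟨fun s t h => by simp, by simp⟩
        · rintro a b _ _ ⟨ha, har⟩ ⟨hb, hbr⟩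
          refine ⟨fun s t h => ?_, ?_⟩
          · show τ s t h (a t + b t) = a s + b s
            rw [map_add, ha s t h, hb s t h]
          · show a r + b r = 0
            rw [har, hbr, add_zero]
        · rintro a _ ⟨ha, har⟩
          refine ⟨fun s t h => ?_, ?_⟩
          · show τ s t h (-(a t)) = -(a s)
            rw [map_neg, ha s t h]
          · show -(a r) = 0
            rw [har, neg_zero]
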